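/- For every integer r ≥ 1, the integer r² divides the integer ∑_{d ∣ r} μ(r/d)·(−1)^{d+1}·C(2d − 1, d − 1). (Equivalently, the bottom BPS invariants b⁻_r = (1/r²)·∑_{d ∣ r} μ(r/d)·(−1)^{d+1}·C(2d−1, d−1) of the twist knots K_p with p ≥ 2, whose generating data are the Catalan numbers, are integers.) -/

import Mathlib

open Finset

noncomputable def aBPS (d : ℕ) : ℤ := (-1)^(d+1) * (Nat.choose (2*d - 1) (d - 1) : ℤ)

lemma sq_zero_prod {R : Type*} [CommRing R] (s : Finset ℕ) (f : ℕ → R) (ε : R) (hε : ε^2 = 0) :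
    ∏ t ∈ s, (ε + f t) = ∏ t ∈ s, f t + ε * ∑ t ∈ s, ∏ t' ∈ s.erase t, f t' := by
  classical
  induction s using Finset.induction_on with
  | empty => simp
  | @insert a s ha ih =>
    rw [prod_insert ha, prod_insert ha, sum_insert ha, ih, Finset.erase_insert ha]
    have h2 : ∀ t ∈ s, ∏ t' ∈ (insert a s).erase t, f t' = f a * ∏ t' ∈ s.erase t, f t' := by
      intro t ht
      rw [Finset.erase_insert_of_ne (fun h => ha (by rw [h]; exact ht)), prod_insert]
      exact fun h => ha (mem_of_mem_erase h)
    rw [Finset.sum_congr rfl h2, ← Finset.mul_sum]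
    have h0 : ε * ε = 0 := by rw [← sq]; exact hε
    linear_combination h0 * (∑ t ∈ s, ∏ t' ∈ s.erase t, f t')

/-- the set of non-multiples of `p` in `(0, N]` -/
def Tset (p N : ℕ) : Finset ℕ := (Finset.Ioc 0 N).filter (fun t => ¬ p ∣ t)

lemma Q_zero (p k : ℕ) (hp : p.Prime) (hk : 1 ≤ k) (hq2 : p ^ k ≠ 2) :
    (p^k : ℕ) ∣ ∑ t ∈ Tset p (p^k), ∏ t' ∈ (Tset p (p^k)).erase t, t' := by
  classical
  set q := p ^ k with hq
  have hpq : p ∣ q := dvd_pow_self p (by omega)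
  have hq0 : 0 < q := Nat.pow_pos hp.pos
  rw [← ZMod.natCast_eq_zero_iff]
  push_cast
  have hmem : ∀ t, t ∈ Tset p q ↔ 0 < t ∧ t ≤ q ∧ ¬ p ∣ t := by
    intro t; simp [Tset, Finset.mem_filter, Finset.mem_Ioc, and_assoc]
  have hlt : ∀ t ∈ Tset p q, t < q := by
    intro t ht
    rcases (hmem t).mp ht with ⟨h1, h2, h3⟩
    rcases lt_or_eq_of_le h2 with h | h
    · exact h
    · exact absurd (h ▸ hpq) h3
  have hmemsub : ∀ t ∈ Tset p q, q - t ∈ Tset p q := by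
    intro t ht
    rcases (hmem t).mp ht with ⟨h1, h2, h3⟩
    have htq : t < q := hlt t ht
    rw [hmem]
    refine ⟨by omega, by omega, fun hd => h3 ?_⟩
    have : p ∣ q - (q - t) := (Nat.dvd_sub hpq hd)
    rwa [Nat.sub_sub_self (le_of_lt htq)] at this
  refine Finset.sum_involution (fun t _ => q - t) ?_ ?_ ?_ ?_
  · intro t ht
    beta_reduce
    rcases (hmem t).mp ht with ⟨h1, h2, h3⟩
    have htq : t < q := hlt t ht
    have hu : IsUnit ((t : ZMod q)) := by
      rw [ZMod.isUnit_iff_coprime]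
      exact Nat.Coprime.pow_right k ((hp.coprime_iff_not_dvd.mpr h3).symm)
    have e1 : (t : ZMod q) * (∏ t' ∈ (Tset p q).erase t, (t' : ZMod q))
        = ∏ t' ∈ Tset p q, (t' : ZMod q) :=
      Finset.mul_prod_erase (Tset p q) (fun x => (x : ZMod q)) ht
    have e2 : (-(t : ZMod q)) * (∏ t' ∈ (Tset p q).erase (q - t), (t' : ZMod q))
        = ∏ t' ∈ Tset p q, (t' : ZMod q) := by
      have hc : ((q - t : ℕ) : ZMod q) = -(t : ZMod q) := by
        rw [Nat.cast_sub (le_of_lt htq)]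
        simp [ZMod.natCast_self]
      rw [← hc]
      exact Finset.mul_prod_erase (Tset p q) (fun x => (x : ZMod q)) (hmemsub t ht)
    have key : (t : ZMod q) * ((∏ t' ∈ (Tset p q).erase t, (t' : ZMod q))
        + (∏ t' ∈ (Tset p q).erase (q - t), (t' : ZMod q))) = 0 := by
      rw [mul_add, e1]
      linear_combination e1 - e2 - e1
    exact (hu.mul_right_eq_zero).mp key
  · intro t ht _
    beta_reduce
    rcases (hmem t).mp ht with ⟨h1, h2, h3⟩
    intro heq
    have h2t : q = 2 * t := by omega
    have hp2t : p ∣ 2 * t := h2t ▸ hpq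
    rcases (Nat.Prime.dvd_mul hp).mp hp2t with hd | hd
    · have hp2 : p = 2 := (Nat.prime_dvd_prime_iff_eq hp Nat.prime_two).mp hd
      subst hp2
      have hk2 : 2 ≤ k := by
        by_contra h
        interval_cases k
        · rw [pow_one] at hq; exact hq2 hq
      have h4 : (4:ℕ) ∣ 2 * t := by
        calc (4:ℕ) = 2^2 := by norm_num
        _ ∣ 2^k := pow_dvd_pow 2 hk2
        _ = 2*t := by rw [← hq, h2t]
      exact h3 (by omega)
    · exact h3 hd
  · intro t ht
    beta_reduce
    exact hmemsub t ht
  · intro t ht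
    beta_reduce
    have := hlt t ht
    omega

lemma Tset_prod_eq (p N : ℕ) :
    (∏ j ∈ Tset p N, j) = ∏ j ∈ Finset.Ioc 0 N, (if p ∣ j then 1 else j) := by
  rw [Tset, Finset.prod_filter]
  exact Finset.prod_congr rfl (fun j _ => by by_cases h : p ∣ j <;> simp [h])

lemma Tset_split (p q L : ℕ) (hpq : p ∣ q) :
    (∏ j ∈ Tset p ((L+1) * q), j) = (∏ j ∈ Tset p (L * q), j) * ∏ t ∈ Tset p q, (L * q + t) := by
  classical
  rw [Tset_prod_eq, Tset_prod_eq]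
  have h1 : (∏ j ∈ Finset.Ioc 0 (L*q), (if p ∣ j then 1 else j))
      * (∏ j ∈ Finset.Ioc (L*q) ((L+1)*q), (if p ∣ j then 1 else j))
      = ∏ j ∈ Finset.Ioc 0 ((L+1)*q), (if p ∣ j then 1 else j) :=
    Finset.prod_Ioc_consecutive _ (Nat.zero_le _) (by nlinarith)
  rw [← h1]
  congr 1
  have h2 : Finset.Ioc (L*q) ((L+1)*q) = (Finset.Ioc 0 q).map (addLeftEmbedding (L*q)) := by
    rw [Finset.map_add_left_Ioc]
    congr 1 <;> ring
  rw [h2, Finset.prod_map]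
  simp only [addLeftEmbedding_apply]
  have h3 : ∀ t ∈ Finset.Ioc 0 q, (if p ∣ L*q + t then 1 else L*q+t)
      = (if p ∣ t then 1 else L*q+t) := by
    intro t _
    have : p ∣ L*q + t ↔ p ∣ t := by
      constructor
      · intro h; have := Nat.dvd_sub h (Dvd.dvd.mul_left hpq L); simpa using this
      · intro h; exact Nat.dvd_add (Dvd.dvd.mul_left hpq L) h
    by_cases h : p ∣ t <;> simp [this, h]
  rw [Finset.prod_congr rfl h3, Tset, Finset.prod_filter]
  exact Finset.prod_congr rfl (fun j _ => by by_cases h : p ∣ j <;> simp [h])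

lemma blocks (p k : ℕ) (hp : p.Prime) (hk : 1 ≤ k) (hq2 : p^k ≠ 2) (L : ℕ) :
    ((∏ j ∈ Tset p (L * p^k), j : ℕ) : ZMod (p^k * p^k))
      = ((∏ t ∈ Tset p (p^k), t : ℕ) : ZMod (p^k * p^k)) ^ L := by
  classical
  set q := p ^ k with hq
  have hpq : p ∣ q := dvd_pow_self p (by omega)
  induction L with
  | zero => simp [Tset]
  | succ L ih =>
    rw [Tset_split p q L hpq]
    push_cast
    push_cast at ih
    rw [ih]
    have hqq : ((q : ZMod (q*q)) * (q : ZMod (q*q))) = 0 := by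
      rw [← Nat.cast_mul, ZMod.natCast_self]
    have hε : ((L : ZMod (q*q)) * (q : ZMod (q*q)))^2 = 0 := by
      ring_nf
      rw [mul_comm] at hqq
      rw [sq (q : ZMod (q*q))] at *
      linear_combination (L:ZMod (q*q))^2 * hqq
    rw [sq_zero_prod (Tset p q) (fun t => (t : ZMod (q*q))) _ hε]
    obtain ⟨c, hc⟩ := Q_zero p k hp hk hq2
    have hsum : (∑ t ∈ Tset p q, ∏ t' ∈ (Tset p q).erase t, (t' : ZMod (q*q)))
        = ((q * c : ℕ) : ZMod (q*q)) := by
      rw [← hq] at hc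
      rw [← hc]
      push_cast
      rfl
    rw [hsum]
    push_cast
    have : (L : ZMod (q*q)) * (q:ZMod (q*q)) * ((q:ZMod (q*q)) * (c:ZMod (q*q))) = 0 := by
      linear_combination (L:ZMod (q*q)) * (c:ZMod (q*q)) * hqq
    rw [this]
    ring

lemma prod_Ioc_id_eq_factorial (n : ℕ) : (∏ j ∈ Finset.Ioc 0 n, j) = n.factorial := by
  have : Finset.Ioc 0 n = Finset.Ico 1 (n+1) := by
    ext j; simp [Finset.mem_Ioc, Finset.mem_Ico]; omega
  rw [this, Finset.prod_Ico_id_eq_factorial]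

lemma fact_split (p N : ℕ) (hp : 0 < p) :
    (p*N).factorial = p^N * N.factorial * ∏ j ∈ Tset p (p*N), j := by
  classical
  have h0 : (∏ j ∈ Finset.Ioc 0 (p*N), j) = (p*N).factorial := prod_Ioc_id_eq_factorial _
  rw [← h0, ← Finset.prod_filter_mul_prod_filter_not (Finset.Ioc 0 (p*N)) (fun j => p ∣ j) (fun j => j)]
  have himg : Finset.filter (fun j => p ∣ j) (Finset.Ioc 0 (p*N))
      = (Finset.Ioc 0 N).image (fun i => p * i) := by
    ext j
    simp only [Finset.mem_filter, Finset.mem_Ioc, Finset.mem_image]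
    constructor
    · rintro ⟨⟨hj0, hjN⟩, i, rfl⟩
      refine ⟨i, ⟨Nat.pos_of_ne_zero (by rintro rfl; simp at hj0), Nat.le_of_mul_le_mul_left hjN hp⟩, rfl⟩
    · rintro ⟨i, ⟨hi0, hiN⟩, rfl⟩
      exact ⟨⟨by positivity, Nat.mul_le_mul_left p hiN⟩, i, rfl⟩
  have hinj : Set.InjOn (fun i => p * i) (Finset.Ioc 0 N) := by
    intro a _ b _ h
    exact Nat.eq_of_mul_eq_mul_left hp h
  rw [himg, Finset.prod_image hinj]
  rw [Finset.prod_mul_distrib, Finset.prod_const, Nat.card_Ioc, Nat.sub_zero,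
    prod_Ioc_id_eq_factorial]
  rfl

lemma key_identity (p m : ℕ) (hp : 0 < p) :
    Nat.choose (2*(p*m)) (p*m) * (∏ j ∈ Tset p (p*m), j)^2
      = Nat.choose (2*m) m * ∏ j ∈ Tset p (2*(p*m)), j := by
  set B := ∏ j ∈ Tset p (p*m), j with hB
  set A := ∏ j ∈ Tset p (2*(p*m)), j with hA
  set X := p^m * m.factorial with hX
  have f2 : (p*m).factorial = X * B := by rw [fact_split p m hp]
  have f1 : (2*(p*m)).factorial = p^(2*m) * (2*m).factorial * A := by
    have h := fact_split p (2*m) hp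
    rw [show p*(2*m) = 2*(p*m) by ring] at h
    exact h
  have c1 : Nat.choose (2*(p*m)) (p*m) * (p*m).factorial * (p*m).factorial
      = (2*(p*m)).factorial := by
    have := Nat.choose_mul_factorial_mul_factorial (show p*m ≤ 2*(p*m) by omega)
    rwa [show 2*(p*m) - p*m = p*m by omega] at this
  have c2 : Nat.choose (2*m) m * m.factorial * m.factorial = (2*m).factorial := by
    have := Nat.choose_mul_factorial_mul_factorial (show m ≤ 2*m by omega)
    rwa [show 2*m - m = m by omega] at this
  have main : Nat.choose (2*(p*m)) (p*m) * B^2 * X^2 = (Nat.choose (2*m) m * A) * X^2 := by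
    calc Nat.choose (2*(p*m)) (p*m) * B^2 * X^2
        = Nat.choose (2*(p*m)) (p*m) * (X*B) * (X*B) := by ring
      _ = (2*(p*m)).factorial := by rw [← f2, c1]
      _ = p^(2*m) * ((2*m).factorial) * A := f1
      _ = p^(2*m) * (Nat.choose (2*m) m * m.factorial * m.factorial) * A := by rw [c2]
      _ = (Nat.choose (2*m) m * A) * X^2 := by rw [hX]; ring
  have hX0 : 0 < X^2 := by
    have : 0 < X := Nat.mul_pos (Nat.pow_pos hp) m.factorial_pos
    positivity
  exact Nat.eq_of_mul_eq_mul_right hX0 main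

lemma p_not_dvd_Tset_prod (p N : ℕ) (hp : p.Prime) : ¬ p ∣ ∏ j ∈ Tset p N, j := by
  intro h
  obtain ⟨t, ht, hd⟩ := (Prime.dvd_finset_prod_iff hp.prime _).mp h
  exact (Finset.mem_filter.mp ht).2 hd

lemma AB_cong (p m : ℕ) (hp : p.Prime) (hm : 0 < m)
    (hq2 : p^((p*m).factorization p) ≠ 2) :
    (∏ j ∈ Tset p (2*(p*m)), j) ≡ (∏ j ∈ Tset p (p*m), j)^2
      [MOD (p^((p*m).factorization p))^2] := by
  set k := (p*m).factorization p with hkdef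
  have hpm0 : p * m ≠ 0 := Nat.mul_ne_zero hp.pos.ne' hm.ne'
  have hk1 : 1 ≤ k := (hp.factorization_pos_of_dvd hpm0 ⟨m, rfl⟩)
  set q := p^k with hqdef
  obtain ⟨e, he⟩ : q ∣ p*m := Nat.ordProj_dvd (p*m) p
  have h1 : p*m = e * q := by rw [he]; ring
  have h2 : 2*(p*m) = (2*e) * q := by rw [he]; ring
  have b1 := blocks p k hp hk1 hq2 e
  have b2 := blocks p k hp hk1 hq2 (2*e)
  rw [← hqdef] at b1 b2
  rw [← h1] at b1
  rw [← h2] at b2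
  have : ((∏ j ∈ Tset p (2*(p*m)), j : ℕ) : ZMod (q*q))
      = (((∏ j ∈ Tset p (p*m), j)^2 : ℕ) : ZMod (q*q)) := by
    rw [Nat.cast_pow, b1, b2, ← pow_mul, mul_comm 2 e]
  have := (ZMod.natCast_eq_natCast_iff _ _ _).mp this
  rwa [show q*q = q^2 by ring] at this

lemma double_choose (n : ℕ) (hn : 0 < n) :
    2 * Nat.choose (2*n - 1) (n - 1) = Nat.choose (2*n) n := by
  obtain ⟨n, rfl⟩ := Nat.exists_eq_add_of_le hn
  have h1 : 2*(1+n) - 1 = 2*n+1 := by omega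
  have h2 : (1+n) - 1 = n := by omega
  have h3 : 2*(1+n) = (2*n+1)+1 := by omega
  have h4 : 1+n = n+1 := by omega
  rw [h1, h2, h3, h4, Nat.choose_succ_succ, Nat.choose_symm_half, two_mul]

lemma main_cong (p m : ℕ) (hp : p.Prime) (hm : 0 < m)
    (hq2 : p^((p*m).factorization p) ≠ 2) :
    ((p:ℤ)^(2*((p*m).factorization p))) ∣
      ((Nat.choose (2*(p*m) - 1) (p*m - 1) : ℤ) - (Nat.choose (2*m - 1) (m - 1) : ℤ)) := by
  set k := (p*m).factorization p with hkdef
  set q := p^k with hqdef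
  set A := (∏ j ∈ Tset p (2*(p*m)), j) with hA
  set B := (∏ j ∈ Tset p (p*m), j) with hB
  have hpm : 0 < p * m := Nat.mul_pos hp.pos hm
  have dAB : ((q^2 : ℕ) : ℤ) ∣ (A : ℤ) - ((B : ℤ))^2 := by
    have h := (AB_cong p m hp hm hq2).symm.dvd
    rw [← hqdef, ← hA, ← hB] at h
    exact_mod_cast h
  have keyZ : ((Nat.choose (2*(p*m)) (p*m) : ℤ)) * (B:ℤ)^2
      = (Nat.choose (2*m) m : ℤ) * (A:ℤ) := by
    exact_mod_cast key_identity p m hp.pos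
  have hCb : (Nat.choose (2*(p*m)) (p*m) : ℤ)
      = 2 * (Nat.choose (2*(p*m) - 1) (p*m - 1) : ℤ) := by
    exact_mod_cast (double_choose (p*m) hpm).symm
  have hCs : (Nat.choose (2*m) m : ℤ) = 2 * (Nat.choose (2*m - 1) (m - 1) : ℤ) := by
    exact_mod_cast (double_choose m hm).symm
  set Cb' := (Nat.choose (2*(p*m) - 1) (p*m - 1) : ℤ)
  set Cs' := (Nat.choose (2*m - 1) (m - 1) : ℤ)
  have ident : (2*Cb' - 2*Cs') * (B:ℤ)^2 = (2*Cs') * ((A:ℤ) - (B:ℤ)^2) := by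
    rw [← hCb, ← hCs]; linear_combination keyZ
  have hpB : ¬ p ∣ B := p_not_dvd_Tset_prod p (p*m) hp
  have hcopqB : Nat.Coprime (q^2) (B^2) :=
    Nat.Coprime.pow _ _ ((hp.coprime_iff_not_dvd.mpr hpB).pow_left k)
  have hgoal : (((q:ℕ):ℤ))^2 ∣ Cb' - Cs' := by
    rcases hp.eq_two_or_odd with hp2 | hodd
    · -- p = 2 : use the extra factor 2 from Cs
      have h1 : (2 * (q^2 : ℕ) : ℤ) ∣ (2*Cs') * ((A:ℤ) - (B:ℤ)^2) := by
        push_cast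
        push_cast at dAB
        exact mul_dvd_mul (dvd_mul_right 2 Cs') dAB
      rw [← ident] at h1
      have h3 : ((2:ℤ) * ((q:ℤ)^2)) ∣ 2 * ((Cb' - Cs') * (B:ℤ)^2) := by
        push_cast at h1
        convert h1 using 1 <;> ring
      have h2 : ((q:ℤ)^2) ∣ (Cb' - Cs') * (B:ℤ)^2 :=
        (mul_dvd_mul_iff_left (two_ne_zero (α := ℤ))).mp h3
      have hcop : IsCoprime ((q:ℤ)^2) (((B:ℤ))^2) := by
        have := hcopqB.isCoprime
        push_cast at this
        exact this
      exact hcop.dvd_of_dvd_mul_right h2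
    · -- p odd
      have h1 : ((q:ℤ)^2) ∣ (2*Cb' - 2*Cs') * (B:ℤ)^2 := by
        rw [ident]
        push_cast at dAB
        exact Dvd.dvd.mul_left dAB _
      have hcop : IsCoprime ((q:ℤ)^2) (2 * (B:ℤ)^2) := by
        have hnd2 : ¬ p ∣ 2 := by
          intro h
          have := (Nat.prime_dvd_prime_iff_eq hp Nat.prime_two).mp h
          omega
        have c2 : Nat.Coprime (q^2) 2 :=
          ((hp.coprime_iff_not_dvd.mpr hnd2).pow_left k).pow_left 2
        have := (Nat.Coprime.mul_right c2 hcopqB).isCoprime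
        push_cast at this
        convert this using 1
      have h2 : ((q:ℤ)^2) ∣ 2 * (B:ℤ)^2 * (Cb' - Cs') := by
        convert h1 using 1; ring
      exact hcop.dvd_of_dvd_mul_left h2
  have hfin : ((p:ℤ))^(2*k) = ((q:ℕ):ℤ)^2 := by
    rw [hqdef]; push_cast; rw [← pow_mul, mul_comm k 2]
  rw [hfin]
  exact hgoal


lemma A4 (m : ℕ) : ((∏ j ∈ Tset 2 (m * 4), j : ℕ) : ZMod 4) = (-1)^m := by
  induction m with
  | zero => simp [Tset]
  | succ m ih =>
    rw [Tset_split 2 4 m (by norm_num), Nat.cast_mul, ih]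
    have hT4 : Tset 2 4 = {1, 3} := by decide
    rw [hT4, Finset.prod_insert (by decide), Finset.prod_singleton]
    push_cast
    have h4 : ((4:ℤ) : ZMod 4) = 0 := by decide
    push_cast at h4
    rw [h4]
    ring_nf
    linear_combination ((-1 : ZMod 4))^m * h4


lemma case2_1 (m : ℕ) (hm : Odd m) :
    (4:ℤ) ∣ (Nat.choose (2*(2*m) - 1) (2*m - 1) : ℤ) + (Nat.choose (2*m - 1) (m - 1) : ℤ) := by
  have hm0 : 0 < m := hm.pos
  set A := (∏ j ∈ Tset 2 (2*(2*m)), j) with hA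
  set B := (∏ j ∈ Tset 2 (2*m), j) with hB
  have hA4 : ((A : ℕ) : ZMod 4) = ((3:ℕ) : ZMod 4) := by
    have h1 : 2*(2*m) = m * 4 := by ring
    rw [hA, h1, A4 m, hm.neg_one_pow]
    decide
  have hA1 : (4:ℤ) ∣ (A:ℤ) + 1 := by
    have h2 : (4:ℤ) ∣ (A:ℤ) - 3 := by
      have := (ZMod.natCast_eq_natCast_iff A 3 4).mp hA4
      exact_mod_cast this.symm.dvd
    obtain ⟨c, hc⟩ := h2
    exact ⟨c + 1, by linarith⟩
  have hBodd : ¬ (2:ℕ) ∣ B := p_not_dvd_Tset_prod 2 (2*m) Nat.prime_two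
  have hBoddZ : Odd (B:ℤ) := by
    have : Odd B := Nat.odd_iff.mpr (Nat.two_dvd_ne_zero.mp hBodd)
    exact_mod_cast this
  have hB1 : (4:ℤ) ∣ (B:ℤ)^2 - 1 := by
    obtain ⟨c, hc⟩ := hBoddZ
    exact ⟨c^2 + c, by rw [hc]; ring⟩
  have hAB : (4:ℤ) ∣ (A:ℤ) + (B:ℤ)^2 := by
    have := dvd_add hA1 hB1
    rw [show (A:ℤ) + (B:ℤ)^2 = (A:ℤ) + 1 + ((B:ℤ)^2 - 1) by ring]; exact this
  have keyZ : ((Nat.choose (2*(2*m)) (2*m) : ℤ)) * (B:ℤ)^2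
      = (Nat.choose (2*m) m : ℤ) * (A:ℤ) := by
    exact_mod_cast key_identity 2 m (by norm_num)
  have hCb : (Nat.choose (2*(2*m)) (2*m) : ℤ)
      = 2 * (Nat.choose (2*(2*m) - 1) (2*m - 1) : ℤ) := by
    exact_mod_cast (double_choose (2*m) (by omega)).symm
  have hCs : (Nat.choose (2*m) m : ℤ) = 2 * (Nat.choose (2*m - 1) (m - 1) : ℤ) := by
    exact_mod_cast (double_choose m hm0).symm
  set Cb' := (Nat.choose (2*(2*m) - 1) (2*m - 1) : ℤ)
  set Cs' := (Nat.choose (2*m - 1) (m - 1) : ℤ)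
  have ident : (2*Cb' + 2*Cs') * (B:ℤ)^2 = (2*Cs') * ((A:ℤ) + (B:ℤ)^2) := by
    rw [← hCb, ← hCs]; linear_combination keyZ
  have h8 : (2:ℤ) * 4 ∣ (2*Cs') * ((A:ℤ) + (B:ℤ)^2) :=
    mul_dvd_mul (dvd_mul_right (2:ℤ) Cs') hAB
  rw [← ident] at h8
  have h8' : (2:ℤ) * 4 ∣ 2 * ((Cb' + Cs') * (B:ℤ)^2) := by
    rw [show (2:ℤ) * ((Cb' + Cs') * (B:ℤ)^2) = (2*Cb' + 2*Cs') * (B:ℤ)^2 by ring]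
    exact h8
  have h4 : (4:ℤ) ∣ (Cb' + Cs') * (B:ℤ)^2 :=
    (mul_dvd_mul_iff_left (two_ne_zero (α := ℤ))).mp h8'
  have hcop : IsCoprime ((4:ℤ)) ((B:ℤ)^2) := by
    have c1 : Nat.Coprime (2^2) (B^2) :=
      Nat.Coprime.pow _ _ (Nat.prime_two.coprime_iff_not_dvd.mpr hBodd)
    have := c1.isCoprime
    push_cast at this
    norm_num at this
    exact this
  exact hcop.dvd_of_dvd_mul_right h4




lemma local_step (p n : ℕ) (hp : p.Prime) (hn : 0 < n) (hpn : p ∣ n) :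
    ((p:ℤ)^(2 * n.factorization p)) ∣ aBPS n - aBPS (n / p) := by
  obtain ⟨m, rfl⟩ := hpn
  have hm : 0 < m := Nat.pos_of_ne_zero (by rintro rfl; simp at hn)
  rw [Nat.mul_div_cancel_left m hp.pos]
  unfold aBPS
  by_cases hsp : p = 2 ∧ Odd m
  · obtain ⟨rfl, hmodd⟩ := hsp
    have hk : (2*m).factorization 2 = 1 := by
      rw [Nat.factorization_mul (by norm_num) hm.ne']
      simp [Nat.Prime.factorization_self Nat.prime_two,
        Nat.factorization_eq_zero_of_not_dvd (Nat.two_dvd_ne_zero.mpr (Nat.odd_iff.mp hmodd))]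
    rw [hk]
    have h1 : ((-1:ℤ))^(2*m+1) = -1 := Odd.neg_one_pow (by exact ⟨m, by ring⟩)
    have h2 : ((-1:ℤ))^(m+1) = 1 := Even.neg_one_pow (Odd.add_one hmodd)
    rw [h1, h2]
    have := case2_1 m hmodd
    have h4 : (((2:ℕ):ℤ))^(2*1) = 4 := by norm_num
    rw [h4]
    have : (4:ℤ) ∣ -((Nat.choose (2*(2*m) - 1) (2*m - 1) : ℤ)
        + (Nat.choose (2*m - 1) (m - 1) : ℤ)) := (case2_1 m hmodd).neg_right
    convert this using 1
    ring
  · -- q ≠ 2 case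
    have hq2 : p^((p*m).factorization p) ≠ 2 := by
      intro h
      have hk1 : 1 ≤ (p*m).factorization p :=
        hp.factorization_pos_of_dvd (by positivity) ⟨m, rfl⟩
      have hpd : p ∣ 2 := h ▸ dvd_pow_self p (Nat.one_le_iff_ne_zero.mp hk1)
      have hp2 : p = 2 := (Nat.prime_dvd_prime_iff_eq hp Nat.prime_two).mp hpd
      subst hp2
      rcases Nat.even_or_odd m with hev | hod
      · obtain ⟨c, rfl⟩ := hev
        have h4 : (2:ℕ)^2 ∣ 2*(c+c) := ⟨c, by ring⟩
        have hge := (Nat.Prime.pow_dvd_iff_le_factorization Nat.prime_two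
          (by omega : 2*(c+c) ≠ 0)).mp h4
        have h4le : (2:ℕ)^2 ≤ 2^((2*(c+c)).factorization 2) :=
          Nat.pow_le_pow_right (by norm_num) hge
        omega
      · exact hsp ⟨rfl, hod⟩
    have hsign : ((-1:ℤ))^(p*m+1) = (-1)^(m+1) := by
      rcases Nat.even_or_odd m with hev | hod
      · rw [Odd.neg_one_pow (hev.add_one), Odd.neg_one_pow ((hev.mul_left p).add_one)]
      · have hpodd : Odd p := by
          rcases hp.eq_two_or_odd' with h2 | ho
          · subst h2; exact absurd ⟨rfl, hod⟩ hsp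
          · exact ho
        rw [Even.neg_one_pow (hod.add_one), Even.neg_one_pow ((hpodd.mul hod).add_one)]
    rw [hsign, ← mul_sub]
    exact Dvd.dvd.mul_left (main_cong p m hp hm hq2) _




lemma prime_pow_dvd_sum (r : ℕ) (hr : 0 < r) (p : ℕ) (hp : p.Prime) (hpr : p ∣ r) :
    ((p:ℤ)^(2 * r.factorization p)) ∣
      ∑ d ∈ r.divisors, (ArithmeticFunction.moebius d : ℤ) * aBPS (r / d) := by
  classical
  rw [← Finset.sum_filter_add_sum_filter_not r.divisors (fun d => p ∣ d)]
  set E := r.divisors.filter (fun d => p ∣ d ∧ ¬ p * p ∣ d) with hE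
  have hsub : ∑ d ∈ r.divisors.filter (fun d => p ∣ d),
      (ArithmeticFunction.moebius d : ℤ) * aBPS (r / d)
      = ∑ d ∈ E, (ArithmeticFunction.moebius d : ℤ) * aBPS (r / d) := by
    refine (Finset.sum_subset ?_ ?_).symm
    · intro d hd
      exact Finset.mem_filter.mpr ⟨(Finset.mem_filter.mp hd).1, (Finset.mem_filter.mp hd).2.1⟩
    · intro d hd hdE
      have h2 : p * p ∣ d := by
        by_contra h
        exact hdE (Finset.mem_filter.mpr
          ⟨(Finset.mem_filter.mp hd).1, (Finset.mem_filter.mp hd).2, h⟩)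
      have : ¬ Squarefree d := fun hsq => hp.not_isUnit (hsq p h2)
      rw [ArithmeticFunction.moebius_eq_zero_of_not_squarefree this]
      simp
  rw [hsub]
  set D1 := r.divisors.filter (fun d => ¬ p ∣ d) with hD1
  have hbij : ∑ d ∈ E, (ArithmeticFunction.moebius d : ℤ) * aBPS (r / d)
      = ∑ e ∈ D1, (ArithmeticFunction.moebius (p * e) : ℤ) * aBPS (r / (p * e)) := by
    refine Finset.sum_nbij' (fun d => d / p) (fun e => p * e) ?_ ?_ ?_ ?_ ?_
    · intro d hd
      beta_reduce
      obtain ⟨hdr, hpd, hp2d⟩ := Finset.mem_filter.mp hd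
      obtain ⟨hdvd, hr0⟩ := Nat.mem_divisors.mp hdr
      obtain ⟨u, rfl⟩ := hpd
      rw [Nat.mul_div_cancel_left u hp.pos]
      refine Finset.mem_filter.mpr
        ⟨Nat.mem_divisors.mpr ⟨dvd_trans ⟨p, mul_comm p u⟩ hdvd, hr0⟩, ?_⟩
      intro hpu
      exact hp2d (mul_dvd_mul_left p hpu)
    · intro e he
      obtain ⟨her, hpe⟩ := Finset.mem_filter.mp he
      obtain ⟨hedvd, hr0⟩ := Nat.mem_divisors.mp her
      refine Finset.mem_filter.mpr ⟨Nat.mem_divisors.mpr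
        ⟨(hp.coprime_iff_not_dvd.mpr hpe).mul_dvd_of_dvd_of_dvd hpr hedvd, hr0⟩,
        Dvd.intro e rfl, ?_⟩
      intro h
      exact hpe ((mul_dvd_mul_iff_left hp.pos.ne').mp h)
    · intro d hd
      exact Nat.mul_div_cancel' (Finset.mem_filter.mp hd).2.1
    · intro e he
      exact Nat.mul_div_cancel_left e hp.pos
    · intro d hd
      rw [Nat.mul_div_cancel' (Finset.mem_filter.mp hd).2.1]
  rw [hbij, ← Finset.sum_add_distrib]
  refine Finset.dvd_sum ?_
  intro e he
  obtain ⟨her, hpe⟩ := Finset.mem_filter.mp he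
  obtain ⟨hedvd, hr0⟩ := Nat.mem_divisors.mp her
  have hcop : Nat.Coprime p e := hp.coprime_iff_not_dvd.mpr hpe
  have hmu : (ArithmeticFunction.moebius (p * e) : ℤ)
      = - (ArithmeticFunction.moebius e : ℤ) := by
    rw [ArithmeticFunction.isMultiplicative_moebius.map_mul_of_coprime hcop,
      ArithmeticFunction.moebius_apply_prime hp]
    ring
  have hre : r / (p * e) = (r / e) / p := by
    rw [Nat.div_div_eq_div_mul, mul_comm]
  rw [hmu, hre]
  have hterm : -(ArithmeticFunction.moebius e : ℤ) * aBPS (r / e / p)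
      + (ArithmeticFunction.moebius e : ℤ) * aBPS (r / e)
      = (ArithmeticFunction.moebius e : ℤ) * (aBPS (r / e) - aBPS (r / e / p)) := by ring
  rw [hterm]
  have hfac : (r / e).factorization p = r.factorization p := by
    rw [Nat.factorization_div hedvd]
    simp [Nat.factorization_eq_zero_of_not_dvd hpe]
  have hpre : p ∣ r / e :=
    (Nat.dvd_div_iff_mul_dvd hedvd).mpr (by rw [mul_comm]; exact hcop.mul_dvd_of_dvd_of_dvd hpr hedvd)
  have hrepos : 0 < r / e := Nat.div_pos (Nat.le_of_dvd hr hedvd) (Nat.pos_of_dvd_of_pos hedvd hr)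
  have := local_step p (r / e) hp hrepos hpre
  rw [hfac] at this
  exact Dvd.dvd.mul_left this _




/-- **Integrality of bottom BPS invariants of positive twist knots.**
For every `r ≥ 1`, `r²` divides `∑_{d ∣ r} μ(r/d)·(−1)^{d+1}·C(2d − 1, d − 1)`. -/
theorem twist_knot_pos_bottom_bps_integrality (r : ℕ) (hr : 1 ≤ r) :
    ((r : ℤ) ^ 2) ∣ ∑ d ∈ r.divisors,
      ArithmeticFunction.moebius (r / d) * (-1) ^ (d + 1) *
        (Nat.choose (2 * d - 1) (d - 1) : ℤ) := by
  classical
  have hr0 : r ≠ 0 := by omega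
  have step1 : ∑ d ∈ r.divisors, (ArithmeticFunction.moebius (r / d) : ℤ) * (-1) ^ (d + 1) *
        (Nat.choose (2 * d - 1) (d - 1) : ℤ)
      = ∑ d ∈ r.divisors, (ArithmeticFunction.moebius d : ℤ) * aBPS (r / d) := by
    have e1 : ∀ d ∈ r.divisors, (ArithmeticFunction.moebius (r / d) : ℤ) * (-1) ^ (d + 1) *
        (Nat.choose (2 * d - 1) (d - 1) : ℤ)
        = (fun x => (ArithmeticFunction.moebius x : ℤ) * aBPS (r / x)) (r / d) := by
      intro d hd
      obtain ⟨hdvd, _⟩ := Nat.mem_divisors.mp hd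
      simp only []
      rw [Nat.div_div_self hdvd hr0, aBPS, mul_assoc]
    rw [Finset.sum_congr rfl e1, Nat.sum_div_divisors r
      (fun x => (ArithmeticFunction.moebius x : ℤ) * aBPS (r / x))]
  rw [step1]
  have hfact : ((r:ℤ))^2 = ∏ p ∈ r.primeFactors, ((p:ℤ))^(2 * r.factorization p) := by
    have h1 : (r : ℕ) = ∏ p ∈ r.primeFactors, p ^ (r.factorization p) := by
      have h2 := Nat.factorization_prod_pow_eq_self hr0
      rw [Finsupp.prod, Nat.support_factorization] at h2
      exact h2.symm
    calc ((r:ℤ))^2 = (((∏ p ∈ r.primeFactors, p ^ (r.factorization p) : ℕ)) : ℤ)^2 := by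
          rw [← h1]
      _ = ∏ p ∈ r.primeFactors, ((p:ℤ))^(2 * r.factorization p) := by
          push_cast
          rw [← Finset.prod_pow]
          refine Finset.prod_congr rfl ?_
          intro p _
          rw [← pow_mul, mul_comm]
  rw [hfact]
  refine Finset.prod_dvd_of_coprime ?_ ?_
  · intro p hp q hq hne
    have hp' := Nat.prime_of_mem_primeFactors hp
    have hq' := Nat.prime_of_mem_primeFactors hq
    have cop : Nat.Coprime (p ^ (2 * r.factorization p)) (q ^ (2 * r.factorization q)) :=
      Nat.Coprime.pow _ _ ((Nat.coprime_primes hp' hq').mpr hne)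
    have := cop.isCoprime
    push_cast at this
    exact this
  · intro p hp
    exact prime_pow_dvd_sum r (by omega) p (Nat.prime_of_mem_primeFactors hp)
      (Nat.dvd_of_mem_primeFactors hp)
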